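/- arXiv:1602.00413 — 4 statements merged into one kernel-verified Lean document; each statement's English description precedes it below -/
import Mathlib

section
/- Let V ⊆ (ℤ/2)^{2n} be a subgroup (viewing Pauli elements as binary vectors) generated by 2c symplectic-pair generators g₁,h₁,…,g_c,h_c all of even weight and r isotropic generators g_{c+1},…,g_{c+r} all of even weight, satisfying the standard commutation relations (⟨g_i,g_j⟩=0, ⟨h_i,h_j⟩=0, ⟨g_i,h_j⟩=0 for i≠j, ⟨g_i,h_i⟩=1), and suppose all 2c+r generators are independent. Then the number of elements of V of even weight equals 2^{r-1}(4^c + 2^c) and the number of elements of odd weight equals 2^{r-1}(4^c - 2^c), provided r ≥ 1 or (with the convention 2^{-1}(4^c+2^c) interpreted for r=0 as (4^c+2^c)/2). -/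
open Finset

/-- An `n`-qubit Pauli operator modulo phase, identified with `(u, v) ∈ (ℤ/2)ⁿ × (ℤ/2)ⁿ`
(corresponding to `Z^u X^v`). -/
abbrev Pauli (n : ℕ) := (Fin n → ZMod 2) × (Fin n → ZMod 2)

/-- The weight of a Pauli operator: the number of qubits on which it acts nontrivially. -/
def wtP {n : ℕ} (g : Pauli n) : ℕ :=
  (Finset.univ.filter fun i => g.1 i ≠ 0 ∨ g.2 i ≠ 0).card

/-- The symplectic inner product of two Pauli operators. -/
def sip {n : ℕ} (g h : Pauli n) : ZMod 2 :=
  ∑ i, (g.1 i * h.2 i + g.2 i * h.1 i)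

/-! ### Auxiliary lemmas -/

lemma z2cases (a : ZMod 2) : a = 0 ∨ a = 1 := by revert a; decide

/-- The weight mod 2, as an explicit polynomial expression. -/
def Qp {n : ℕ} (x : Pauli n) : ZMod 2 := ∑ i, (x.1 i + x.2 i + x.1 i * x.2 i)

lemma Qp_zero {n : ℕ} : Qp (0 : Pauli n) = 0 := by simp [Qp]

lemma sip_add_right {n : ℕ} (x y z : Pauli n) : sip x (y + z) = sip x y + sip x z := by
  unfold sip
  rw [← Finset.sum_add_distrib]
  refine Finset.sum_congr rfl fun i _ => ?_
  simp only [Prod.fst_add, Prod.snd_add, Pi.add_apply]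
  ring

lemma sip_add_left {n : ℕ} (x y z : Pauli n) : sip (x + y) z = sip x z + sip y z := by
  unfold sip
  rw [← Finset.sum_add_distrib]
  refine Finset.sum_congr rfl fun i _ => ?_
  simp only [Prod.fst_add, Prod.snd_add, Pi.add_apply]
  ring

lemma sip_zero_right {n : ℕ} (x : Pauli n) : sip x 0 = 0 := by simp [sip]

lemma sip_zero_left {n : ℕ} (x : Pauli n) : sip 0 x = 0 := by simp [sip]

lemma sip_smul_right {n : ℕ} (a : ZMod 2) (x y : Pauli n) : sip x (a • y) = a * sip x y := by
  unfold sip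
  rw [Finset.mul_sum]
  refine Finset.sum_congr rfl fun i _ => ?_
  simp only [Prod.smul_fst, Prod.smul_snd, Pi.smul_apply, smul_eq_mul]
  ring

lemma sip_smul_left {n : ℕ} (a : ZMod 2) (x y : Pauli n) : sip (a • x) y = a * sip x y := by
  unfold sip
  rw [Finset.mul_sum]
  refine Finset.sum_congr rfl fun i _ => ?_
  simp only [Prod.smul_fst, Prod.smul_snd, Pi.smul_apply, smul_eq_mul]
  ring

lemma sip_sum_right {n : ℕ} {ι : Type*} (x : Pauli n) (s : Finset ι) (y : ι → Pauli n) :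
    sip x (∑ i ∈ s, y i) = ∑ i ∈ s, sip x (y i) := by
  induction s using Finset.cons_induction with
  | empty => simp [sip_zero_right]
  | cons a s ha ih => rw [Finset.sum_cons, Finset.sum_cons, sip_add_right, ih]

lemma sip_sum_left {n : ℕ} {ι : Type*} (x : Pauli n) (s : Finset ι) (y : ι → Pauli n) :
    sip (∑ i ∈ s, y i) x = ∑ i ∈ s, sip (y i) x := by
  induction s using Finset.cons_induction with
  | empty => simp [sip_zero_left]
  | cons a s ha ih => rw [Finset.sum_cons, Finset.sum_cons, sip_add_left, ih]

lemma Qp_add {n : ℕ} (x y : Pauli n) : Qp (x + y) = Qp x + Qp y + sip x y := by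
  unfold Qp sip
  rw [← Finset.sum_add_distrib, ← Finset.sum_add_distrib]
  refine Finset.sum_congr rfl fun i _ => ?_
  simp only [Prod.fst_add, Prod.snd_add, Pi.add_apply]
  generalize x.1 i = u1; generalize x.2 i = v1; generalize y.1 i = u2; generalize y.2 i = v2
  revert u1 v1 u2 v2; decide

lemma Qp_cast {n : ℕ} (x : Pauli n) : Qp x = (wtP x : ZMod 2) := by
  unfold Qp wtP
  rw [Finset.card_filter, Nat.cast_sum]
  refine Finset.sum_congr rfl fun i _ => ?_
  generalize x.1 i = u; generalize x.2 i = v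
  revert u v; decide

lemma even_iff_Qp {n : ℕ} (x : Pauli n) : Even (wtP x) ↔ Qp x = 0 := by
  rw [Qp_cast, ZMod.natCast_eq_zero_iff, even_iff_two_dvd]

lemma Qp_sum_isotropic {n : ℕ} {ι : Type*} (s : Finset ι) (x : ι → Pauli n)
    (h0 : ∀ i ∈ s, Qp (x i) = 0) (h1 : ∀ i ∈ s, ∀ j ∈ s, sip (x i) (x j) = 0) :
    Qp (∑ i ∈ s, x i) = 0 := by
  induction s using Finset.cons_induction with
  | empty => simp [Qp_zero]
  | cons a s ha ih =>
    rw [Finset.sum_cons, Qp_add, sip_sum_right,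
      ih (fun i hi => h0 i (Finset.mem_cons_of_mem hi))
        (fun i hi j hj => h1 i (Finset.mem_cons_of_mem hi) j (Finset.mem_cons_of_mem hj)),
      h0 a (Finset.mem_cons_self a s)]
    rw [Finset.sum_eq_zero fun j hj =>
      h1 a (Finset.mem_cons_self a s) j (Finset.mem_cons_of_mem hj)]
    ring

lemma Qp_smul {n : ℕ} (a : ZMod 2) (x : Pauli n) (hx : Qp x = 0) : Qp (a • x) = 0 := by
  rcases z2cases a with h0 | h1
  · rw [h0, zero_smul, Qp_zero]
  · rwa [h1, one_smul]

/-! ### The parametrization of the subgroup -/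

/-- The parameter space: coefficients for the `g`'s and the `h`'s. -/
abbrev Dom (c r : ℕ) := (Fin (c + r) → ZMod 2) × (Fin c → ZMod 2)

/-- The linear parametrization of the subgroup generated by the `g i` and `h j`. -/
def phi {n c r : ℕ} (g : Fin (c + r) → Pauli n) (h : Fin c → Pauli n) :
    Dom c r →ₗ[ZMod 2] Pauli n where
  toFun p := (∑ i, p.1 i • g i) + (∑ j, p.2 j • h j)
  map_add' p q := by
    simp only [Prod.fst_add, Prod.snd_add, Pi.add_apply, add_smul, Finset.sum_add_distrib]
    abel
  map_smul' a p := by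
    simp only [Prod.smul_fst, Prod.smul_snd, Pi.smul_apply, smul_eq_mul, mul_smul,
      RingHom.id_apply, smul_add, Finset.smul_sum]

lemma phi_single_left {n c r : ℕ} (g : Fin (c + r) → Pauli n) (h : Fin c → Pauli n)
    (i : Fin (c + r)) : phi g h (Pi.single i 1, 0) = g i := by
  simp only [phi, LinearMap.coe_mk, AddHom.coe_mk]
  rw [Finset.sum_eq_single i (fun k _ hk => by rw [Pi.single_eq_of_ne hk, zero_smul])
    (fun hi => absurd (Finset.mem_univ i) hi)]
  simp

lemma phi_single_right {n c r : ℕ} (g : Fin (c + r) → Pauli n) (h : Fin c → Pauli n)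
    (j : Fin c) : phi g h (0, Pi.single j 1) = h j := by
  simp only [phi, LinearMap.coe_mk, AddHom.coe_mk]
  rw [Finset.sum_eq_single j (fun k _ hk => by rw [Pi.single_eq_of_ne hk, zero_smul])
    (fun hj => absurd (Finset.mem_univ j) hj)]
  simp

lemma range_phi {n c r : ℕ} (g : Fin (c + r) → Pauli n) (h : Fin c → Pauli n) :
    Set.range (phi g h)
      = (AddSubgroup.closure (Set.range g ∪ Set.range h) : AddSubgroup (Pauli n)) := by
  apply Set.Subset.antisymm
  · rintro _ ⟨p, rfl⟩
    show _ ∈ AddSubgroup.closure _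
    simp only [phi, LinearMap.coe_mk, AddHom.coe_mk]
    apply AddSubgroup.add_mem
    · apply AddSubgroup.sum_mem
      intro i _
      rcases z2cases (p.1 i) with h0 | h1
      · rw [h0, zero_smul]; exact AddSubgroup.zero_mem _
      · rw [h1, one_smul]
        exact AddSubgroup.subset_closure (Or.inl ⟨i, rfl⟩)
    · apply AddSubgroup.sum_mem
      intro j _
      rcases z2cases (p.2 j) with h0 | h1
      · rw [h0, zero_smul]; exact AddSubgroup.zero_mem _
      · rw [h1, one_smul]
        exact AddSubgroup.subset_closure (Or.inr ⟨j, rfl⟩)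
  · intro x hx
    have hle : AddSubgroup.closure (Set.range g ∪ Set.range h) ≤
        (LinearMap.range (phi g h)).toAddSubgroup := by
      rw [AddSubgroup.closure_le]
      rintro x (⟨i, rfl⟩ | ⟨j, rfl⟩)
      · exact ⟨(Pi.single i 1, 0), phi_single_left g h i⟩
      · exact ⟨(0, Pi.single j 1), phi_single_right g h j⟩
    exact hle hx

lemma card_dom (c r : ℕ) : Nat.card (Dom c r) = 2 ^ (2 * c + r) := by
  rw [Nat.card_eq_fintype_card, Fintype.card_prod, Fintype.card_fun, Fintype.card_fun,
    ZMod.card, Fintype.card_fin, Fintype.card_fin]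
  rw [← pow_add]
  ring_nf

lemma phi_inj {n c r : ℕ} (g : Fin (c + r) → Pauli n) (h : Fin c → Pauli n)
    (hcard : Nat.card (AddSubgroup.closure (Set.range g ∪ Set.range h) : AddSubgroup (Pauli n))
      = 2 ^ (2 * c + r)) : Function.Injective (phi g h) := by
  have hr : Set.range (phi g h) = ↑(AddSubgroup.closure (Set.range g ∪ Set.range h)) :=
    range_phi g h
  have h1 : Fintype.card (Set.range (phi g h)) = Fintype.card (Dom c r) := by
    rw [← Nat.card_eq_fintype_card, ← Nat.card_eq_fintype_card, card_dom, hr, ← hcard]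
    simp
  have hsurj : Function.Surjective (Set.rangeFactorization (phi g h)) :=
    Set.rangeFactorization_surjective
  have hbij : Function.Bijective (Set.rangeFactorization (phi g h)) :=
    (Fintype.bijective_iff_surjective_and_card _).2 ⟨hsurj, h1.symm⟩
  have heq : (phi g h : Dom c r → Pauli n)
      = Subtype.val ∘ Set.rangeFactorization (phi g h) := rfl
  rw [heq]
  exact Subtype.val_injective.comp hbij.1

lemma Qp_phi {n c r : ℕ} (g : Fin (c + r) → Pauli n) (h : Fin c → Pauli n)
    (hgg : ∀ i j, sip (g i) (g j) = 0)
    (hhh : ∀ i j, sip (h i) (h j) = 0)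
    (hgh : ∀ (i : Fin (c + r)) (j : Fin c), sip (g i) (h j) = if (i : ℕ) = (j : ℕ) then 1 else 0)
    (hgeven : ∀ i, Even (wtP (g i))) (hheven : ∀ j, Even (wtP (h j)))
    (p : Dom c r) :
    Qp (phi g h p) = ∑ j : Fin c, p.1 (Fin.castAdd r j) * p.2 j := by
  have hu : Qp (∑ i, p.1 i • g i) = 0 := by
    apply Qp_sum_isotropic
    · exact fun i _ => Qp_smul _ _ ((even_iff_Qp _).1 (hgeven i))
    · intro i _ j _
      rw [sip_smul_left, sip_smul_right, hgg, mul_zero, mul_zero]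
  have hv : Qp (∑ j, p.2 j • h j) = 0 := by
    apply Qp_sum_isotropic
    · exact fun j _ => Qp_smul _ _ ((even_iff_Qp _).1 (hheven j))
    · intro i _ j _
      rw [sip_smul_left, sip_smul_right, hhh, mul_zero, mul_zero]
  show Qp ((∑ i, p.1 i • g i) + (∑ j, p.2 j • h j)) = _
  rw [Qp_add, hu, hv, zero_add, zero_add, sip_sum_left]
  have hterm : ∀ i : Fin (c + r), sip (p.1 i • g i) (∑ j, p.2 j • h j)
      = ∑ j : Fin c, p.1 i * (p.2 j * if (i : ℕ) = (j : ℕ) then 1 else 0) := by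
    intro i
    rw [sip_smul_left, sip_sum_right, Finset.mul_sum]
    refine Finset.sum_congr rfl fun j _ => ?_
    rw [sip_smul_right, hgh]
  rw [Finset.sum_congr rfl fun i _ => hterm i, Finset.sum_comm]
  refine Finset.sum_congr rfl fun j _ => ?_
  rw [Finset.sum_eq_single (Fin.castAdd r j)]
  · simp
  · intro i _ hi
    rw [if_neg, mul_zero, mul_zero]
    simpa [Fin.ext_iff] using hi
  · exact fun hj => absurd (Finset.mem_univ _) hj

/-! ### Counting -/

lemma count_hyp (c : ℕ) :
    2 * (Finset.univ.filter fun pq : (Fin c → ZMod 2) × (Fin c → ZMod 2) =>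
        ∑ j, pq.1 j * pq.2 j = 0).card = 4 ^ c + 2 ^ c := by
  have hsplit : (Finset.univ.filter fun pq : (Fin c → ZMod 2) × (Fin c → ZMod 2) =>
        ∑ j, pq.1 j * pq.2 j = 0).card
      = ∑ a : Fin c → ZMod 2,
          (Finset.univ.filter fun b : Fin c → ZMod 2 => ∑ j, a j * b j = 0).card := by
    rw [Finset.card_filter, Fintype.sum_prod_type]
    refine Finset.sum_congr rfl fun a _ => ?_
    rw [Finset.card_filter]
  have fib1 : ∀ a : Fin c → ZMod 2, a ≠ 0 →
      2 * (Finset.univ.filter fun b : Fin c → ZMod 2 => ∑ j, a j * b j = 0).card = 2 ^ c := by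
    intro a ha
    obtain ⟨j0, hj0⟩ : ∃ j0, a j0 ≠ 0 := by
      by_contra hc
      push_neg at hc
      exact ha (funext fun j => hc j)
    have hj1 : a j0 = 1 := (z2cases (a j0)).resolve_left hj0
    set s : Fin c → ZMod 2 := Pi.single j0 1 with hs
    have hls : ∑ j, a j * s j = 1 := by
      rw [Finset.sum_eq_single j0]
      · rw [hs, Pi.single_eq_same, hj1, mul_one]
      · intro k _ hk
        rw [hs, Pi.single_eq_of_ne hk, mul_zero]
      · exact fun hj => absurd (Finset.mem_univ _) hj
    have hss : ∀ b : Fin c → ZMod 2, b + s + s = b := by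
      intro b
      funext j
      simp only [Pi.add_apply]
      rcases z2cases (s j) with h | h <;> rcases z2cases (b j) with h' | h' <;>
        rw [h, h'] <;> decide
    have hcards : (Finset.univ.filter fun b : Fin c → ZMod 2 => ∑ j, a j * b j = 0).card
        = (Finset.univ.filter fun b : Fin c → ZMod 2 => ¬ (∑ j, a j * b j = 0)).card := by
      apply Finset.card_nbij' (fun b => b + s) (fun b => b + s)
      · intro b hb
        simp only [Finset.coe_filter, Set.mem_setOf_eq, Finset.mem_filter, Finset.mem_univ, true_and] at hb ⊢
        intro hcontra
        have h1 : ∑ j, a j * (b + s) j = 1 := by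
          rw [Finset.sum_congr rfl (fun j _ => by rw [Pi.add_apply, mul_add]),
            Finset.sum_add_distrib, hb, hls, zero_add]
        rw [h1] at hcontra
        exact one_ne_zero hcontra
      · intro b hb
        simp only [Finset.coe_filter, Set.mem_setOf_eq, Finset.mem_filter, Finset.mem_univ, true_and] at hb ⊢
        have hb1 : ∑ j, a j * b j = 1 := (z2cases _).resolve_left hb
        rw [Finset.sum_congr rfl (fun j _ => by rw [Pi.add_apply, mul_add]),
          Finset.sum_add_distrib, hb1, hls]
        decide
      · exact fun b _ => hss b
      · exact fun b _ => hss b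
    have htot := Finset.card_filter_add_card_filter_not
      (s := (Finset.univ : Finset (Fin c → ZMod 2)))
      (p := fun b => ∑ j, a j * b j = 0)
    rw [← hcards] at htot
    rw [two_mul, htot, Finset.card_univ, Fintype.card_fun, ZMod.card, Fintype.card_fin]
  have fib0 : (Finset.univ.filter fun b : Fin c → ZMod 2 =>
      ∑ j, (0 : Fin c → ZMod 2) j * b j = 0).card = 2 ^ c := by
    simp [Finset.filter_true_of_mem, Fintype.card_fun]
  rw [hsplit, Finset.mul_sum,
    ← Finset.add_sum_erase _ _ (Finset.mem_univ (0 : Fin c → ZMod 2))]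
  rw [fib0]
  rw [Finset.sum_congr rfl (fun a ha => fib1 a (Finset.ne_of_mem_erase ha)),
    Finset.sum_const, smul_eq_mul]
  have hcarde : (Finset.univ.erase (0 : Fin c → ZMod 2)).card = 2 ^ c - 1 := by
    rw [Finset.card_erase_of_mem (Finset.mem_univ _), Finset.card_univ, Fintype.card_fun,
      ZMod.card, Fintype.card_fin]
  rw [hcarde]
  have h4 : 4 ^ c = 2 ^ c * 2 ^ c := by rw [← mul_pow]; norm_num
  have h1 : 1 ≤ 2 ^ c := Nat.one_le_two_pow
  rw [Nat.sub_mul, one_mul, h4]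
  generalize hB : (2:ℕ) ^ c = B at h1 ⊢
  generalize hA : B * B = A
  have h2 : B ≤ A := by rw [← hA]; exact Nat.le_mul_of_pos_left _ h1
  clear hsplit fib0 fib1 hcarde hB hA
  omega

lemma count_dom (c r : ℕ) :
    (Finset.univ.filter fun p : Dom c r => ∑ j, p.1 (Fin.castAdd r j) * p.2 j = 0).card
      = 2 ^ r * (Finset.univ.filter fun pq : (Fin c → ZMod 2) × (Fin c → ZMod 2) =>
          ∑ j, pq.1 j * pq.2 j = 0).card := by
  have hbij : (Finset.univ.filter fun p : Dom c r =>
        ∑ j, p.1 (Fin.castAdd r j) * p.2 j = 0).card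
      = (Finset.univ.filter fun q : (Fin r → ZMod 2) ×
          ((Fin c → ZMod 2) × (Fin c → ZMod 2)) => ∑ j, q.2.1 j * q.2.2 j = 0).card := by
    apply Finset.card_nbij'
      (fun p => (fun j => p.1 (Fin.natAdd c j), (fun j => p.1 (Fin.castAdd r j), p.2)))
      (fun q => (Fin.append q.2.1 q.1, q.2.2))
    · intro p hp
      simpa using (Finset.mem_filter.1 hp).2
    · intro q hq
      simp only [Finset.coe_filter, Set.mem_setOf_eq, Finset.mem_filter, Finset.mem_univ, true_and] at hq ⊢
      rw [Finset.sum_congr rfl fun j _ => by rw [Fin.append_left]]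
      exact hq
    · intro p _
      refine Prod.ext ?_ rfl
      exact Fin.append_castAdd_natAdd
    · intro q _
      refine Prod.ext ?_ ?_
      · funext j; exact Fin.append_right _ _ j
      · refine Prod.ext ?_ rfl
        funext j; exact Fin.append_left _ _ j
  rw [hbij]
  have hprod : (Finset.univ.filter fun q : (Fin r → ZMod 2) ×
        ((Fin c → ZMod 2) × (Fin c → ZMod 2)) => ∑ j, q.2.1 j * q.2.2 j = 0)
      = Finset.univ ×ˢ (Finset.univ.filter fun pq : (Fin c → ZMod 2) × (Fin c → ZMod 2) =>
          ∑ j, pq.1 j * pq.2 j = 0) := by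
    ext ⟨x, y⟩
    simp [Finset.mem_product]
  rw [hprod, Finset.card_product, Finset.card_univ, Fintype.card_fun, ZMod.card,
    Fintype.card_fin]

/-- Type I: all generators of even weight. The conclusions are stated multiplied by 2,
so that `2^{r-1}(4^c ± 2^c)` makes sense also for `r = 0` (where it means `(4^c ± 2^c)/2`). -/
theorem typeI_weight_count {n c r : ℕ} (g : Fin (c + r) → Pauli n) (h : Fin c → Pauli n)
    (hgg : ∀ i j, sip (g i) (g j) = 0)
    (hhh : ∀ i j, sip (h i) (h j) = 0)
    (hgh : ∀ (i : Fin (c + r)) (j : Fin c), sip (g i) (h j) = if (i : ℕ) = (j : ℕ) then 1 else 0)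
    (hcard : Nat.card (AddSubgroup.closure (Set.range g ∪ Set.range h) : AddSubgroup (Pauli n))
      = 2 ^ (2 * c + r))
    (hgeven : ∀ i, Even (wtP (g i))) (hheven : ∀ j, Even (wtP (h j))) :
    2 * {x | x ∈ AddSubgroup.closure (Set.range g ∪ Set.range h) ∧ Even (wtP x)}.ncard
        = 2 ^ r * (4 ^ c + 2 ^ c) ∧
    2 * {x | x ∈ AddSubgroup.closure (Set.range g ∪ Set.range h) ∧ ¬ Even (wtP x)}.ncard
        = 2 ^ r * (4 ^ c - 2 ^ c) := by
  set V := AddSubgroup.closure (Set.range g ∪ Set.range h) with hV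
  set S0 := {x | x ∈ V ∧ Even (wtP x)} with hS0
  set S1 := {x | x ∈ V ∧ ¬ Even (wtP x)} with hS1
  have hinj : Function.Injective (phi g h) := phi_inj g h hcard
  -- S0 is the image of A0
  have himg : S0 = phi g h '' {p : Dom c r | ∑ j, p.1 (Fin.castAdd r j) * p.2 j = 0} := by
    ext x
    constructor
    · rintro ⟨hx, he⟩
      have hx' : x ∈ Set.range (phi g h) := by rw [range_phi g h]; exact hx
      obtain ⟨p, rfl⟩ := hx'
      refine ⟨p, ?_, rfl⟩
      show ∑ j, p.1 (Fin.castAdd r j) * p.2 j = 0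
      rw [← Qp_phi g h hgg hhh hgh hgeven hheven p]
      exact (even_iff_Qp _).1 he
    · rintro ⟨p, hp, rfl⟩
      constructor
      · have : phi g h p ∈ Set.range (phi g h) := ⟨p, rfl⟩
        rwa [range_phi g h] at this
      · rw [even_iff_Qp, Qp_phi g h hgg hhh hgh hgeven hheven p]
        exact hp
  -- count of S0
  have hcount0 : 2 * S0.ncard = 2 ^ r * (4 ^ c + 2 ^ c) := by
    rw [himg, Set.ncard_image_of_injective _ hinj]
    rw [Set.ncard_eq_toFinset_card', Set.toFinset_setOf, count_dom]
    rw [mul_left_comm, count_hyp]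
  refine ⟨hcount0, ?_⟩
  -- total count
  have hunion : S0 ∪ S1 = (V : Set (Pauli n)) := by
    ext x
    simp only [hS0, hS1, Set.mem_union, Set.mem_setOf_eq, SetLike.mem_coe]
    by_cases hx : Even (wtP x) <;> tauto
  have hdisj : Disjoint S0 S1 := by
    rw [Set.disjoint_left]
    rintro x ⟨_, he⟩ ⟨_, hne⟩
    exact hne he
  have htot : S0.ncard + S1.ncard = 2 ^ (2 * c + r) := by
    rw [← Set.ncard_union_eq hdisj (Set.toFinite _) (Set.toFinite _), hunion,
      ← Nat.card_coe_set_eq]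
    rw [← hcard]
    rfl
  -- arithmetic
  have hpow : (2 : ℕ) ^ (2 * c + r) = 2 ^ r * 4 ^ c := by
    rw [pow_add, pow_mul]
    ring_nf
  have hle : (2 : ℕ) ^ r * 2 ^ c ≤ 2 ^ r * 4 ^ c :=
    Nat.mul_le_mul_left _ (Nat.pow_le_pow_left (by norm_num) c)
  rw [Nat.mul_sub]
  rw [hpow] at htot
  rw [Nat.mul_add] at hcount0
  generalize hX : (2 : ℕ) ^ r * 4 ^ c = X at *
  generalize hY : (2 : ℕ) ^ r * 2 ^ c = Y at *
  clear himg hunion hdisj hgg hhh hgh hgeven hheven hinj hX hY hS0 hS1 hV hcard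
  omega
end

section
/- Let B: {0,…,n} × {0,…,c} → ℝ and B⊥: {0,…,n} × {0,…,c} → ℝ be related by the MacWilliams transform B_{i,j} = (1/(2^{n+c} M)) Σ_{u=0}^{n} Σ_{v=0}^{c} B⊥_{u,v} K_i(u;n) K_j(v;c). Suppose B and B⊥ satisfy: B_{0,0}=B⊥_{0,0}=1; 0 ≤ B_{i,j} ≤ B⊥_{i,j}; B_{i,0}=B⊥_{i,0} for 1 ≤ i ≤ d-1. Let f(x,y) = Σ_{i,j} f_{i,j} K_i(x;n) K_j(y;c) with all f_{i,j} ≥ 0, f_{i,0} > 0 for 0 ≤ i ≤ d-1, and f(x,y) ≤ 0 whenever x ≥ d or y ≥ 1 (over integer points in the valid range). Then M ≤ (1/2^{n+c}) · max_{0 ≤ l ≤ d-1} f(l,0)/f_{l,0}. -/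
open Finset

/-- Quaternary Krawtchouk polynomial at integer points. -/
noncomputable def kraw (n i x : ℕ) : ℝ :=
  ∑ j ∈ Finset.range (i + 1),
    (-1 : ℝ) ^ j * 3 ^ (i - j) * (x.choose j) * ((n - x).choose (i - j))

private lemma sum4_comm (s t : Finset ℕ) (F : ℕ → ℕ → ℕ → ℕ → ℝ) :
    ∑ u ∈ s, ∑ v ∈ t, ∑ i ∈ s, ∑ j ∈ t, F u v i j
    = ∑ i ∈ s, ∑ j ∈ t, ∑ u ∈ s, ∑ v ∈ t, F u v i j := by
  calc ∑ u ∈ s, ∑ v ∈ t, ∑ i ∈ s, ∑ j ∈ t, F u v i j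
      = ∑ u ∈ s, ∑ i ∈ s, ∑ v ∈ t, ∑ j ∈ t, F u v i j :=
        Finset.sum_congr rfl fun u _ => Finset.sum_comm
    _ = ∑ i ∈ s, ∑ u ∈ s, ∑ v ∈ t, ∑ j ∈ t, F u v i j := Finset.sum_comm
    _ = ∑ i ∈ s, ∑ u ∈ s, ∑ j ∈ t, ∑ v ∈ t, F u v i j :=
        Finset.sum_congr rfl fun i _ => Finset.sum_congr rfl fun u _ => Finset.sum_comm
    _ = ∑ i ∈ s, ∑ j ∈ t, ∑ u ∈ s, ∑ v ∈ t, F u v i j :=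
        Finset.sum_congr rfl fun i _ => Finset.sum_comm

/-- Theorem 3 of the paper (general linear programming bound), abstracted to split weight
distributions `B, B⊥` related by the MacWilliams transform. -/
theorem ea_lp_bound (n c d : ℕ) (hd : 1 ≤ d) (hdn : d ≤ n)
    (M : ℝ) (hM : 0 < M)
    (B Bp : ℕ → ℕ → ℝ)
    (hMacW : ∀ i ≤ n, ∀ j ≤ c, B i j =
      (1 / (2 ^ (n + c) * M)) * ∑ u ∈ Finset.range (n + 1), ∑ v ∈ Finset.range (c + 1),
        Bp u v * kraw n i u * kraw c j v)
    (hB00 : B 0 0 = 1) (hBp00 : Bp 0 0 = 1)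
    (hBnonneg : ∀ i ≤ n, ∀ j ≤ c, 0 ≤ B i j)
    (hBle : ∀ i ≤ n, ∀ j ≤ c, B i j ≤ Bp i j)
    (hBeq : ∀ i, 1 ≤ i → i ≤ d - 1 → B i 0 = Bp i 0)
    (fc : ℕ → ℕ → ℝ)
    (hfc : ∀ i ≤ n, ∀ j ≤ c, 0 ≤ fc i j)
    (hfc0 : ∀ i ≤ d - 1, 0 < fc i 0)
    (f : ℕ → ℕ → ℝ)
    (hf : ∀ x y, f x y = ∑ i ∈ Finset.range (n + 1), ∑ j ∈ Finset.range (c + 1),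
      fc i j * kraw n i x * kraw c j y)
    (hfneg : ∀ x ≤ n, ∀ y ≤ c, (d ≤ x ∨ 1 ≤ y) → f x y ≤ 0) :
    ∃ l ≤ d - 1, M ≤ (1 / 2 ^ (n + c)) * (f l 0 / fc l 0) := by
  by_contra hcon
  push_neg at hcon
  have h2pow : (0:ℝ) < 2 ^ (n + c) := by positivity
  set K : ℝ := 2 ^ (n + c) * M with hKdef
  have hKpos : 0 < K := by positivity
  set R := Finset.range (n + 1) with hR
  set C := Finset.range (c + 1) with hC
  have hBpnn : ∀ u ≤ n, ∀ v ≤ c, 0 ≤ Bp u v := fun u hu v hv =>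
    le_trans (hBnonneg u hu v hv) (hBle u hu v hv)
  have hmemR : ∀ u ∈ R, u ≤ n := fun u hu => by
    simpa [hR, Nat.lt_succ_iff] using hu
  have hmemC : ∀ v ∈ C, v ≤ c := fun v hv => by
    simpa [hC, Nat.lt_succ_iff] using hv
  -- MacWilliams rewritten
  have hT : ∀ i ∈ R, ∀ j ∈ C,
      ∑ u ∈ R, ∑ v ∈ C, Bp u v * kraw n i u * kraw c j v = K * B i j := by
    intro i hi j hj
    rw [hMacW i (hmemR i hi) j (hmemC j hj)]
    field_simp
  -- key identity
  have hmain : ∑ u ∈ R, ∑ v ∈ C, Bp u v * f u v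
      = K * ∑ i ∈ R, ∑ j ∈ C, fc i j * B i j := by
    have hswap : ∑ u ∈ R, ∑ v ∈ C, Bp u v * f u v
        = ∑ i ∈ R, ∑ j ∈ C, ∑ u ∈ R, ∑ v ∈ C,
            Bp u v * (fc i j * kraw n i u * kraw c j v) := by
      rw [← sum4_comm R C (fun u v i j => Bp u v * (fc i j * kraw n i u * kraw c j v))]
      refine Finset.sum_congr rfl fun u _ => Finset.sum_congr rfl fun v _ => ?_
      rw [hf, Finset.mul_sum]
      exact Finset.sum_congr rfl fun i _ => by rw [Finset.mul_sum]
    rw [hswap, Finset.mul_sum]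
    refine Finset.sum_congr rfl fun i hi => ?_
    rw [Finset.mul_sum]
    refine Finset.sum_congr rfl fun j hj => ?_
    rw [show K * (fc i j * B i j) = fc i j * (K * B i j) by ring, ← hT i hi j hj,
      Finset.mul_sum]
    refine Finset.sum_congr rfl fun u _ => ?_
    rw [Finset.mul_sum]
    exact Finset.sum_congr rfl fun v _ => by ring
  -- upper bound on the left side
  have hupper : ∑ u ∈ R, ∑ v ∈ C, Bp u v * f u v
      ≤ ∑ l ∈ Finset.range d, B l 0 * f l 0 := by
    have step1 : ∑ u ∈ R, ∑ v ∈ C, Bp u v * f u v ≤ ∑ u ∈ R, Bp u 0 * f u 0 := by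
      refine Finset.sum_le_sum fun u hu => ?_
      have hun := hmemR u hu
      rw [hC, Finset.sum_range_succ']
      have htail : ∑ v ∈ Finset.range c, Bp u (v + 1) * f u (v + 1) ≤ 0 := by
        refine Finset.sum_nonpos fun v hv => ?_
        have hvc : v + 1 ≤ c := Finset.mem_range.mp hv
        exact mul_nonpos_of_nonneg_of_nonpos (hBpnn u hun _ hvc)
          (hfneg u hun (v + 1) hvc (Or.inr (Nat.le_add_left 1 v)))
      linarith
    have step2 : ∑ u ∈ R, Bp u 0 * f u 0 ≤ ∑ u ∈ Finset.range d, Bp u 0 * f u 0 := by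
      rw [hR, Finset.range_eq_Ico, ← Finset.sum_Ico_consecutive _ (Nat.zero_le d) (by omega),
        ← Finset.range_eq_Ico]
      have htail : ∑ u ∈ Finset.Ico d (n + 1), Bp u 0 * f u 0 ≤ 0 := by
        refine Finset.sum_nonpos fun u hu => ?_
        have hud : d ≤ u ∧ u < n + 1 := Finset.mem_Ico.mp hu
        exact mul_nonpos_of_nonneg_of_nonpos (hBpnn u (by omega) 0 (Nat.zero_le c))
          (hfneg u (by omega) 0 (Nat.zero_le c) (Or.inl hud.1))
      linarith
    have step3 : ∑ u ∈ Finset.range d, Bp u 0 * f u 0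
        = ∑ l ∈ Finset.range d, B l 0 * f l 0 := by
      refine Finset.sum_congr rfl fun u hu => ?_
      have hud : u < d := Finset.mem_range.mp hu
      rcases Nat.eq_zero_or_pos u with h0 | h1
      · rw [h0, hBp00, hB00]
      · rw [← hBeq u h1 (by omega)]
    linarith
  -- lower bound on the right side
  have hlower : ∑ l ∈ Finset.range d, fc l 0 * B l 0
      ≤ ∑ i ∈ R, ∑ j ∈ C, fc i j * B i j := by
    have s1 : ∑ l ∈ Finset.range d, fc l 0 * B l 0 ≤ ∑ i ∈ R, fc i 0 * B i 0 := by
      refine Finset.sum_le_sum_of_subset_of_nonneg ?_ fun i hi _ => ?_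
      · rw [hR]; exact Finset.range_subset_range.mpr (by omega)
      · exact mul_nonneg (hfc i (hmemR i hi) 0 (Nat.zero_le c))
          (hBnonneg i (hmemR i hi) 0 (Nat.zero_le c))
    have s2 : ∑ i ∈ R, fc i 0 * B i 0 ≤ ∑ i ∈ R, ∑ j ∈ C, fc i j * B i j := by
      refine Finset.sum_le_sum fun i hi => ?_
      refine Finset.single_le_sum (f := fun j => fc i j * B i j)
        (fun j hj => mul_nonneg (hfc i (hmemR i hi) j (hmemC j hj))
          (hBnonneg i (hmemR i hi) j (hmemC j hj)))
        (by rw [hC]; exact Finset.mem_range.mpr (Nat.succ_pos c))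
    linarith
  -- strict inequality from the contradiction hypothesis
  have hstrict : ∀ l < d, f l 0 < K * fc l 0 := by
    intro l hl
    have hld : l ≤ d - 1 := by omega
    have hfcl : 0 < fc l 0 := hfc0 l hld
    have h := hcon l hld
    have h1 : f l 0 / fc l 0 < 2 ^ (n + c) * M := by
      have h2 := mul_lt_mul_of_pos_left h h2pow
      calc f l 0 / fc l 0
          = 2 ^ (n + c) * (1 / 2 ^ (n + c) * (f l 0 / fc l 0)) := by field_simp
        _ < 2 ^ (n + c) * M := h2
    rw [hKdef]
    exact (div_lt_iff₀ hfcl).mp h1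
  -- final contradiction
  have hw : ∑ l ∈ Finset.range d, B l 0 * f l 0
      < ∑ l ∈ Finset.range d, K * (fc l 0 * B l 0) := by
    refine Finset.sum_lt_sum (fun l hl => ?_) ⟨0, Finset.mem_range.mpr hd, ?_⟩
    · have hld : l < d := Finset.mem_range.mp hl
      have hBl : 0 ≤ B l 0 := hBnonneg l (by omega) 0 (Nat.zero_le c)
      nlinarith [hstrict l hld]
    · have h0 := hstrict 0 hd
      rw [hB00]
      nlinarith
  have hfinal : K * ∑ l ∈ Finset.range d, fc l 0 * B l 0
      < K * ∑ l ∈ Finset.range d, fc l 0 * B l 0 := by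
    calc K * ∑ l ∈ Finset.range d, fc l 0 * B l 0
        ≤ K * ∑ i ∈ R, ∑ j ∈ C, fc i j * B i j :=
          mul_le_mul_of_nonneg_left hlower (le_of_lt hKpos)
      _ = ∑ u ∈ R, ∑ v ∈ C, Bp u v * f u v := hmain.symm
      _ ≤ ∑ l ∈ Finset.range d, B l 0 * f l 0 := hupper
      _ < ∑ l ∈ Finset.range d, K * (fc l 0 * B l 0) := hw
      _ = K * ∑ l ∈ Finset.range d, fc l 0 * B l 0 := by rw [Finset.mul_sum]
  exact lt_irrefl _ hfinal
end

section
/- For any nondegenerate ((n,M,d;c)) entanglement-assisted quantum code (i.e., whose weight distributions satisfy B_{i,0}=0 for 0<i<d in addition to the MacWilliams constraints), M · Σ_{j=0}^{t} 3^j binom(n,j) ≤ 2^{n+c}, where t = ⌊(d-1)/2⌋. (Abstract version: under the hypotheses of the general LP theorem with the additional constraint B_{i,0}=0 for 0<i<d, applying the Hamming polynomial f(x,y) with coefficients f_{l,j} = (Σ_{i=0}^{t} K_i(l;n))² yields this bound.) -/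
open Finset

namespace EAHelp

abbrev A := ZMod 2 × ZMod 2

noncomputable def eps (a : ZMod 2) : ℝ := if a = 0 then 1 else -1

lemma zmod2_cases : ∀ a : ZMod 2, a = 0 ∨ a = 1 := by decide

lemma eps_add (a b : ZMod 2) : eps (a + b) = eps a * eps b := by
  have h2 : (1 + 1 : ZMod 2) = 0 := by decide
  have h10 : (1 : ZMod 2) ≠ 0 := by decide
  rcases zmod2_cases a with ha | ha <;> rcases zmod2_cases b with hb | hb <;>
    subst ha <;> subst hb <;> simp [eps, h2, h10]

def dotA (p q : A) : ZMod 2 := p.1 * q.2 + p.2 * q.1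

lemma dotA_comm (p q : A) : dotA p q = dotA q p := by
  simp [dotA]; ring

lemma dotA_add_left (p p' q : A) : dotA (p + p') q = dotA p q + dotA p' q := by
  simp [dotA]; ring

lemma dotA_zero_left (q : A) : dotA 0 q = 0 := by simp [dotA]

lemma dotA_zero_right (q : A) : dotA q 0 = 0 := by simp [dotA]

def pairF {n : ℕ} (x y : Fin n → A) : ZMod 2 := ∑ k, dotA (x k) (y k)

noncomputable def chi {n : ℕ} (x y : Fin n → A) : ℝ := eps (pairF x y)

lemma chi_comm {n : ℕ} (x y : Fin n → A) : chi x y = chi y x := by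
  unfold chi pairF
  congr 1
  exact Finset.sum_congr rfl fun k _ => dotA_comm _ _

lemma chi_add_left {n : ℕ} (x x' y : Fin n → A) :
    chi (x + x') y = chi x y * chi x' y := by
  unfold chi pairF
  rw [← eps_add, ← Finset.sum_add_distrib]
  congr 1
  exact Finset.sum_congr rfl fun k _ => dotA_add_left _ _ _

lemma chi_zero_right {n : ℕ} (x : Fin n → A) : chi x 0 = 1 := by
  unfold chi pairF
  have hz : ∑ k : Fin n, dotA (x k) ((0 : Fin n → A) k) = 0 :=
    Finset.sum_eq_zero fun k _ => dotA_zero_right _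
  rw [hz]; simp [eps]

def wt {n : ℕ} (x : Fin n → A) : ℕ := ∑ k, if x k = 0 then 0 else 1

lemma wt_le {n : ℕ} (x : Fin n → A) : wt x ≤ n := by
  calc wt x ≤ ∑ _k : Fin n, 1 := Finset.sum_le_sum (fun k _ => by split <;> omega)
  _ = n := by simp

lemma wt_zero {n : ℕ} : wt (0 : Fin n → A) = 0 := by simp [wt]

lemma wt_add_le {n : ℕ} (x y : Fin n → A) : wt (x + y) ≤ wt x + wt y := by
  unfold wt
  rw [← Finset.sum_add_distrib]
  refine Finset.sum_le_sum fun k _ => ?_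
  by_cases hx : x k = 0 <;> by_cases hy : y k = 0 <;>
    simp [hx, hy, Pi.add_apply] <;> split <;> omega

lemma card_A : Fintype.card A = 4 := by
  simp [Fintype.card_prod, ZMod.card]

lemma sum_chi {n : ℕ} (y : Fin n → A) :
    ∑ x : Fin n → A, chi x y = if y = 0 then (4 : ℝ) ^ n else 0 := by
  by_cases hy : y = 0
  · subst hy
    simp only [chi_zero_right, if_pos rfl, Finset.sum_const, nsmul_eq_mul, mul_one]
    rw [Finset.card_univ, Fintype.card_fun]
    simp [card_A]
  · rw [if_neg hy]
    obtain ⟨k, hk⟩ : ∃ k, y k ≠ 0 := by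
      by_contra h
      push_neg at h
      exact hy (funext fun k => h k)
    have hq : ∃ q : A, dotA q (y k) = 1 := by
      revert hk
      have : ∀ p : A, p ≠ 0 → ∃ q : A, dotA q p = 1 := by decide
      exact this (y k)
    obtain ⟨q0, hq0⟩ := hq
    set x0 : Fin n → A := Pi.single k q0 with hx0
    have hchix0 : chi x0 y = -1 := by
      unfold chi pairF
      have : ∑ m : Fin n, dotA (x0 m) (y m) = 1 := by
        rw [Finset.sum_eq_single k]
        · simp [hx0, hq0]
        · intro m _ hm
          simp [hx0, Pi.single_eq_of_ne hm, dotA_zero_left]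
        · simp
      rw [this]; simp [eps]
    have hsum : ∑ x : Fin n → A, chi (x + x0) y = ∑ x : Fin n → A, chi x y :=
      Fintype.sum_equiv (Equiv.addRight x0) _ _ (fun x => rfl)
    have : ∑ x : Fin n → A, chi x y = -∑ x : Fin n → A, chi x y := by
      calc ∑ x : Fin n → A, chi x y = ∑ x : Fin n → A, chi (x + x0) y := hsum.symm
      _ = ∑ x : Fin n → A, chi x y * chi x0 y :=
          Finset.sum_congr rfl fun x _ => chi_add_left x x0 y
      _ = -∑ x : Fin n → A, chi x y := by rw [hchix0]; simp [← Finset.sum_neg_distrib]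
    linarith

/-! ### Krawtchouk basic values and recurrences -/

lemma kraw_zero_i (n u : ℕ) : kraw n 0 u = 1 := by
  simp [kraw]

lemma kraw_zero_right (n l : ℕ) : kraw n l 0 = 3 ^ l * (n.choose l : ℝ) := by
  unfold kraw
  rw [Finset.sum_eq_single 0]
  · simp
  · intro j _ hj
    obtain ⟨j', rfl⟩ := Nat.exists_eq_succ_of_ne_zero hj
    simp [Nat.choose]
  · simp

lemma kraw_n0 (i : ℕ) : kraw 0 i 0 = if i = 0 then 1 else 0 := by
  rcases Nat.eq_zero_or_pos i with hi | hi
  · subst hi; simp [kraw_zero_i]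
  · rw [if_neg (by omega)]
    unfold kraw
    refine Finset.sum_eq_zero fun j hj => ?_
    rcases Nat.eq_zero_or_pos j with hj0 | hj0
    · subst hj0
      have : (0 : ℕ).choose i = 0 := Nat.choose_eq_zero_of_lt hi
      simp [this]
    · have : (0 : ℕ).choose j = 0 := Nat.choose_eq_zero_of_lt hj0
      simp [this]

lemma krecA (n i u : ℕ) (hu : u ≤ n) :
    kraw (n + 1) (i + 1) u = kraw n (i + 1) u + 3 * kraw n i u := by
  unfold kraw
  have hnu : n + 1 - u = (n - u) + 1 := by omega
  rw [Finset.sum_range_succ (n := i + 1), Finset.sum_range_succ (n := i + 1)]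
  have hsplit : ∀ j ∈ Finset.range (i + 1),
      (-1 : ℝ) ^ j * 3 ^ (i + 1 - j) * (u.choose j) * ((n + 1 - u).choose (i + 1 - j))
      = (-1 : ℝ) ^ j * 3 ^ (i + 1 - j) * (u.choose j) * ((n - u).choose (i + 1 - j))
        + 3 * ((-1 : ℝ) ^ j * 3 ^ (i - j) * (u.choose j) * ((n - u).choose (i - j))) := by
    intro j hj
    rw [Finset.mem_range] at hj
    have hij : i + 1 - j = (i - j) + 1 := by omega
    rw [hnu, hij, Nat.choose_succ_succ]
    simp only [Nat.succ_eq_add_one]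
    push_cast
    ring
  rw [Finset.sum_congr rfl hsplit, Finset.sum_add_distrib, Finset.mul_sum]
  simp only [Nat.sub_self, pow_zero, Nat.choose_zero_right, Nat.cast_one]
  ring

lemma krecB (n i u : ℕ) :
    kraw (n + 1) (i + 1) (u + 1) = kraw n (i + 1) u - kraw n i u := by
  unfold kraw
  have hnu : n + 1 - (u + 1) = n - u := by omega
  rw [hnu]
  rw [Finset.sum_range_succ'
    (fun j => (-1 : ℝ) ^ j * 3 ^ (i + 1 - j) * ((u + 1).choose j) * ((n - u).choose (i + 1 - j)))
    (i + 1)]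
  rw [Finset.sum_range_succ'
    (fun j => (-1 : ℝ) ^ j * 3 ^ (i + 1 - j) * (u.choose j) * ((n - u).choose (i + 1 - j)))
    (i + 1)]
  have hsplit : ∀ m ∈ Finset.range (i + 1),
      (-1 : ℝ) ^ (m + 1) * 3 ^ (i + 1 - (m + 1)) * ((u + 1).choose (m + 1)) * ((n - u).choose (i + 1 - (m + 1)))
      = (-1 : ℝ) ^ (m + 1) * 3 ^ (i + 1 - (m + 1)) * (u.choose (m + 1)) * ((n - u).choose (i + 1 - (m + 1)))
        - (-1 : ℝ) ^ m * 3 ^ (i - m) * (u.choose m) * ((n - u).choose (i - m)) := by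
    intro m hm
    have h1 : i + 1 - (m + 1) = i - m := by omega
    rw [h1, Nat.choose_succ_succ]
    simp only [Nat.succ_eq_add_one]
    push_cast
    ring
  rw [Finset.sum_congr rfl hsplit, Finset.sum_sub_distrib]
  simp only [Nat.choose_zero_right, Nat.cast_one, pow_zero, Nat.sub_zero, one_mul]
  ring

/-! ### Character sum over spheres equals Krawtchouk -/

lemma sum_A (f : A → ℝ) : ∑ p : A, f p = f 0 + f (0,1) + f (1,0) + f (1,1) := by
  have huniv : (Finset.univ : Finset A) = {(0,0), (0,1), (1,0), (1,1)} := by decide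
  have h0 : ((0,0) : A) = 0 := rfl
  rw [huniv, Finset.sum_insert (by decide), Finset.sum_insert (by decide),
    Finset.sum_insert (by decide), Finset.sum_singleton, h0]
  ring

lemma wt_cons {n : ℕ} (x0 : A) (xr : Fin n → A) :
    wt (Fin.cons x0 xr) = (if x0 = 0 then 0 else 1) + wt xr := by
  simp [wt, Fin.sum_univ_succ]

lemma chi_cons {n : ℕ} (x0 : A) (xr : Fin n → A) (y : Fin (n+1) → A) :
    chi (Fin.cons x0 xr) y = eps (dotA x0 (y 0)) * chi xr (Fin.tail y) := by
  unfold chi pairF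
  rw [Fin.sum_univ_succ, eps_add]
  simp [Fin.tail]

lemma wt_head_tail {n : ℕ} (y : Fin (n+1) → A) :
    wt y = (if y 0 = 0 then 0 else 1) + wt (Fin.tail y) := by
  simp [wt, Fin.sum_univ_succ, Fin.tail]
  rfl

lemma lemA : ∀ (n : ℕ) (y : Fin n → A) (i : ℕ),
    (∑ x : Fin n → A, if wt x = i then chi x y else 0) = kraw n i (wt y) := by
  intro n
  induction n with
  | zero =>
    intro y i
    have hy : wt y = 0 := by simp [wt]
    rw [hy, kraw_n0]
    have hu : ∀ x : Fin 0 → A, x = (fun k => 0) := by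
      intro x; funext k; exact absurd k.2 (by omega)
    rw [Finset.sum_eq_single (fun _ => (0 : A))]
    · have hwt : wt (fun _ : Fin 0 => (0 : A)) = 0 := by simp [wt]
      have hchi : chi (fun _ : Fin 0 => (0 : A)) y = 1 := by
        unfold chi pairF
        rw [Finset.sum_eq_zero (fun k _ => absurd k.2 (by omega))]
        simp [eps]
      rw [hwt, hchi]
      by_cases hi : i = 0 <;> simp [hi, eq_comm]
    · intro x _ hx; exact absurd (hu x) hx
    · intro hmem; exact absurd (Finset.mem_univ _) hmem
  | succ n ih =>
    intro y i
    have hre : (∑ x : Fin (n+1) → A, if wt x = i then chi x y else 0)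
        = ∑ p : A × (Fin n → A),
            if wt (Fin.cons p.1 p.2) = i then chi (Fin.cons p.1 p.2) y else 0 := by
      rw [← Equiv.sum_comp (Fin.consEquiv (fun _ => A))
        (fun x => if wt x = i then chi x y else 0)]
      rfl
    rw [hre, Fintype.sum_prod_type]
    have pull : ∀ x0 : A,
        (∑ xr : Fin n → A, if wt (Fin.cons x0 xr) = i then chi (Fin.cons x0 xr) y else 0)
        = eps (dotA x0 (y 0)) *
          ∑ xr : Fin n → A,
            (if (if x0 = 0 then 0 else 1) + wt xr = i then chi xr (Fin.tail y) else 0) := by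
      intro x0
      rw [Finset.mul_sum]
      refine Finset.sum_congr rfl fun xr _ => ?_
      rw [wt_cons, chi_cons]
      split <;> simp
    rw [Finset.sum_congr rfl (fun x0 _ => pull x0), sum_A]
    have h10 : ((0,1) : A) ≠ 0 := by decide
    have h01 : ((1,0) : A) ≠ 0 := by decide
    have h11 : ((1,1) : A) ≠ 0 := by decide
    have key0 : (∑ xr : Fin n → A,
        if (if (0 : A) = 0 then 0 else 1) + wt xr = i then chi xr (Fin.tail y) else 0)
        = kraw n i (wt (Fin.tail y)) := by
      rw [← ih (Fin.tail y) i]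
      refine Finset.sum_congr rfl fun xr _ => ?_
      norm_num
    have key1 : ∀ x0 : A, x0 ≠ 0 → (∑ xr : Fin n → A,
        if (if x0 = 0 then 0 else 1) + wt xr = i then chi xr (Fin.tail y) else 0)
        = (if i = 0 then 0 else kraw n (i-1) (wt (Fin.tail y))) := by
      intro x0 hx0
      rcases i with _ | i'
      · rw [if_pos rfl]
        refine Finset.sum_eq_zero fun xr _ => ?_
        rw [if_neg]
        simp [hx0]
      · rw [if_neg (Nat.succ_ne_zero i')]
        have : ∀ xr : Fin n → A,
            ((if x0 = 0 then 0 else 1) + wt xr = i' + 1) ↔ (wt xr = i') := by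
          intro xr
          simp only [if_neg hx0]
          omega
        simp only [this]
        simpa using ih (Fin.tail y) i'
    rw [key0, key1 _ h10, key1 _ h01, key1 _ h11]
    have hdot0 : dotA (0 : A) (y 0) = 0 := dotA_zero_left _
    have hwt : wt y = (if y 0 = 0 then 0 else 1) + wt (Fin.tail y) := wt_head_tail y
    have hutail : wt (Fin.tail y) ≤ n := wt_le _
    have h4 : ∀ p : A, p = 0 ∨ p = (0,1) ∨ p = (1,0) ∨ p = (1,1) := by decide
    have heps0 : eps 0 = 1 := by simp [eps]
    have heps1 : eps 1 = -1 := by simp [eps, (by decide : (1 : ZMod 2) ≠ 0)]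
    rcases i with _ | i'
    · have hK' : (if 0 = 0 then (0:ℝ) else kraw n (0 - 1) (wt (Fin.tail y))) = 0 := by
        norm_num
      rw [hK', hdot0, heps0, kraw_zero_i, kraw_zero_i]
      ring
    · simp only [if_neg (Nat.succ_ne_zero i'), Nat.add_sub_cancel, hdot0, heps0]
      rcases h4 (y 0) with hy0 | hy0 | hy0 | hy0 <;> rw [hy0] at hwt ⊢
      · have hwtv : wt y = wt (Fin.tail y) := by rw [hwt]; simp
        have hd1 : eps (dotA ((0,1) : A) 0) = 1 := by rw [dotA_zero_right]; exact heps0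
        have hd2 : eps (dotA ((1,0) : A) 0) = 1 := by rw [dotA_zero_right]; exact heps0
        have hd3 : eps (dotA ((1,1) : A) 0) = 1 := by rw [dotA_zero_right]; exact heps0
        rw [hd1, hd2, hd3, hwtv, krecA n i' (wt (Fin.tail y)) hutail]
        ring
      · have hwtv : wt y = wt (Fin.tail y) + 1 := by rw [hwt]; simp [h10]; omega
        have hd1 : dotA ((0,1) : A) ((0,1) : A) = 0 := by decide
        have hd2 : dotA ((1,0) : A) ((0,1) : A) = 1 := by decide
        have hd3 : dotA ((1,1) : A) ((0,1) : A) = 1 := by decide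
        rw [hd1, hd2, hd3, heps0, heps1, hwtv, krecB n i' (wt (Fin.tail y))]
        ring
      · have hwtv : wt y = wt (Fin.tail y) + 1 := by rw [hwt]; simp [h01]; omega
        have hd1 : dotA ((0,1) : A) ((1,0) : A) = 1 := by decide
        have hd2 : dotA ((1,0) : A) ((1,0) : A) = 0 := by decide
        have hd3 : dotA ((1,1) : A) ((1,0) : A) = 1 := by decide
        rw [hd1, hd2, hd3, heps0, heps1, hwtv, krecB n i' (wt (Fin.tail y))]
        ring
      · have hwtv : wt y = wt (Fin.tail y) + 1 := by rw [hwt]; simp [h11]; omega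
        have hd1 : dotA ((0,1) : A) ((1,1) : A) = 1 := by decide
        have hd2 : dotA ((1,0) : A) ((1,1) : A) = 1 := by decide
        have hd3 : dotA ((1,1) : A) ((1,1) : A) = 0 := by decide
        rw [hd1, hd2, hd3, heps0, heps1, hwtv, krecB n i' (wt (Fin.tail y))]
        ring

/-! ### Consequences -/

lemma wt_eq_zero_iff {n : ℕ} (y : Fin n → A) : wt y = 0 ↔ y = 0 := by
  unfold wt
  rw [Finset.sum_eq_zero_iff]
  constructor
  · intro h
    funext k
    have := h k (Finset.mem_univ k)
    by_cases hk : y k = 0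
    · simpa using hk
    · simp [hk] at this
  · intro h k _
    rw [h]
    simp

lemma exists_wt (n u : ℕ) (hu : u ≤ n) : ∃ y : Fin n → A, wt y = u := by
  refine ⟨fun k => if (k : ℕ) < u then ((1,0) : A) else 0, ?_⟩
  unfold wt
  have hterm : ∀ k : Fin n,
      (if (if (k : ℕ) < u then ((1,0) : A) else 0) = 0 then 0 else 1)
      = (if (k : ℕ) < u then 1 else 0) := by
    intro k
    by_cases hk : (k : ℕ) < u <;> simp [hk, (by decide : ((1,0) : A) ≠ 0)]
  rw [Finset.sum_congr rfl fun k _ => hterm k]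
  rw [Fin.sum_univ_eq_sum_range (fun m => if m < u then 1 else 0) n]
  have hfil : (Finset.range n).filter (fun m => m < u) = Finset.range u := by
    ext m
    simp only [Finset.mem_filter, Finset.mem_range]
    omega
  rw [← Finset.sum_filter, hfil]
  simp

lemma kraw_eq_sphere_sum {n : ℕ} (l : ℕ) (x : Fin n → A) :
    kraw n l (wt x) = ∑ z : Fin n → A, (if wt z = l then chi z x else 0) :=
  (lemA n x l).symm

lemma sum_kraw_sphere (n t : ℕ) (x : Fin n → A) :
    ∑ l ∈ Finset.range (t+1), kraw n l (wt x)
      = ∑ z ∈ Finset.univ.filter (fun z : Fin n → A => wt z ≤ t), chi z x := by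
  rw [Finset.sum_filter]
  rw [Finset.sum_congr rfl fun l _ => kraw_eq_sphere_sum l x]
  rw [Finset.sum_comm]
  refine Finset.sum_congr rfl fun z _ => ?_
  rw [Finset.sum_ite_eq (Finset.range (t+1)) (wt z) (fun _ => chi z x)]
  simp [Nat.lt_succ_iff]

lemma sum_kraw_all (n : ℕ) (y : Fin n → A) :
    ∑ j ∈ Finset.range (n+1), kraw n j (wt y) = ∑ z : Fin n → A, chi z y := by
  rw [Finset.sum_congr rfl fun j _ => kraw_eq_sphere_sum j y]
  rw [Finset.sum_comm]
  refine Finset.sum_congr rfl fun z _ => ?_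
  rw [Finset.sum_ite_eq (Finset.range (n+1)) (wt z) (fun _ => chi z y)]
  simp [Nat.lt_succ_iff, wt_le]

lemma sum_kraw_range (c v : ℕ) (hv : v ≤ c) :
    ∑ j ∈ Finset.range (c+1), kraw c j v = if v = 0 then (4:ℝ)^c else 0 := by
  obtain ⟨y, hy⟩ := exists_wt c v hv
  rw [← hy, sum_kraw_all, sum_chi]
  have : (y = 0) ↔ (wt y = 0) := (wt_eq_zero_iff y).symm
  by_cases h : wt y = 0
  · rw [if_pos (this.mpr h), if_pos h]
  · rw [if_neg (fun hh => h (this.mp hh)), if_neg h]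

lemma add_self_A (a : A) : a + a = 0 := by
  revert a; decide

lemma add_self_vec {n : ℕ} (y : Fin n → A) : y + y = 0 := by
  funext k
  exact add_self_A (y k)

lemma core (n t : ℕ) (y : Fin n → A) :
    ∑ i ∈ Finset.range (n+1), (∑ l ∈ Finset.range (t+1), kraw n l i)^2 * kraw n i (wt y)
      = ∑ z ∈ Finset.univ.filter (fun z : Fin n → A => wt z ≤ t),
          ∑ z' ∈ Finset.univ.filter (fun z : Fin n → A => wt z ≤ t),
            (if z + z' = y then (4:ℝ)^n else 0) := by
  set S := Finset.univ.filter (fun z : Fin n → A => wt z ≤ t) with hS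
  -- step 1 : write as a sum over all vectors x
  have step1 : ∑ i ∈ Finset.range (n+1), (∑ l ∈ Finset.range (t+1), kraw n l i)^2 * kraw n i (wt y)
      = ∑ x : Fin n → A, (∑ l ∈ Finset.range (t+1), kraw n l (wt x))^2 * chi x y := by
    rw [Finset.sum_congr rfl fun i _ => by rw [kraw_eq_sphere_sum i y]]
    have : ∀ i ∈ Finset.range (n+1),
        (∑ l ∈ Finset.range (t+1), kraw n l i)^2 * (∑ z : Fin n → A, if wt z = i then chi z y else 0)
        = ∑ z : Fin n → A, (if wt z = i then (∑ l ∈ Finset.range (t+1), kraw n l i)^2 * chi z y else 0) := by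
      intro i _
      rw [Finset.mul_sum]
      exact Finset.sum_congr rfl fun z _ => by split <;> simp
    rw [Finset.sum_congr rfl this, Finset.sum_comm]
    refine Finset.sum_congr rfl fun x _ => ?_
    have hrw : ∀ i ∈ Finset.range (n+1),
        (if wt x = i then (∑ l ∈ Finset.range (t+1), kraw n l i)^2 * chi x y else 0)
        = (if wt x = i then (∑ l ∈ Finset.range (t+1), kraw n l (wt x))^2 * chi x y else 0) := by
      intro i _
      by_cases h : wt x = i
      · rw [if_pos h, if_pos h, h]
      · rw [if_neg h, if_neg h]
    rw [Finset.sum_congr rfl hrw,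
      Finset.sum_ite_eq (Finset.range (n+1)) (wt x)
        (fun _ => (∑ l ∈ Finset.range (t+1), kraw n l (wt x))^2 * chi x y)]
    rw [if_pos (by simp [Nat.lt_succ_iff, wt_le])]
  rw [step1]
  -- step 2 : expand the square as a double sum over S
  have step2 : ∀ x : Fin n → A,
      (∑ l ∈ Finset.range (t+1), kraw n l (wt x))^2 * chi x y
      = ∑ z ∈ S, ∑ z' ∈ S, chi (z + z' + y) x := by
    intro x
    rw [sum_kraw_sphere n t x, sq, Finset.sum_mul_sum]
    rw [Finset.sum_mul]
    refine Finset.sum_congr rfl fun z hz => ?_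
    rw [Finset.sum_mul]
    refine Finset.sum_congr rfl fun z' hz' => ?_
    rw [chi_add_left, chi_add_left, chi_comm y x]
  rw [Finset.sum_congr rfl fun x _ => step2 x, Finset.sum_comm]
  refine Finset.sum_congr rfl fun z hz => ?_
  rw [Finset.sum_comm]
  refine Finset.sum_congr rfl fun z' hz' => ?_
  rw [Finset.sum_congr rfl fun x (_ : x ∈ Finset.univ) => chi_comm (z + z' + y) x, sum_chi]
  congr 1
  · -- (z + z' + y = 0) = (z + z' = y)
    have hyy : y + y = 0 := add_self_vec y
    by_cases h : z + z' = y
    · simp [h, hyy]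
    · have : z + z' + y ≠ 0 := by
        intro hc
        apply h
        have : z + z' + y + y = y := by rw [hc]; simp
        rwa [add_assoc, hyy, add_zero] at this
      simp [this, h]

lemma card_S (n t : ℕ) :
    (∑ z ∈ Finset.univ.filter (fun z : Fin n → A => wt z ≤ t), (1:ℝ))
      = ∑ l ∈ Finset.range (t+1), (3:ℝ)^l * (n.choose l) := by
  have hsph : ∀ l : ℕ, (∑ z : Fin n → A, if wt z = l then (1:ℝ) else 0)
      = (3:ℝ)^l * (n.choose l) := by
    intro l
    have := lemA n 0 l
    rw [wt_zero, kraw_zero_right] at this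
    rw [← this]
    exact Finset.sum_congr rfl fun z _ => by rw [chi_zero_right]
  rw [Finset.sum_congr rfl fun l (_ : l ∈ Finset.range (t+1)) => (hsph l).symm]
  rw [Finset.sum_comm, Finset.sum_filter]
  refine Finset.sum_congr rfl fun z _ => ?_
  rw [Finset.sum_ite_eq (Finset.range (t+1)) (wt z) (fun _ => (1:ℝ))]
  simp [Nat.lt_succ_iff]

lemma h_nonneg (n t u : ℕ) (hu : u ≤ n) :
    0 ≤ ∑ i ∈ Finset.range (n+1), (∑ l ∈ Finset.range (t+1), kraw n l i)^2 * kraw n i u := by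
  obtain ⟨y, hy⟩ := exists_wt n u hu
  rw [← hy, core]
  refine Finset.sum_nonneg fun z _ => Finset.sum_nonneg fun z' _ => ?_
  split
  · positivity
  · exact le_refl 0

lemma h_zero (n t : ℕ) :
    ∑ i ∈ Finset.range (n+1), (∑ l ∈ Finset.range (t+1), kraw n l i)^2 * kraw n i 0
      = (4:ℝ)^n * ∑ l ∈ Finset.range (t+1), (3:ℝ)^l * (n.choose l) := by
  have h0 : wt (0 : Fin n → A) = 0 := wt_zero
  rw [← h0, core]
  have hcond : ∀ z z' : Fin n → A, (z + z' = 0) ↔ (z' = z) := by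
    intro z z'
    constructor
    · intro h
      have : z + (z + z') = z := by rw [h]; simp
      rwa [← add_assoc, add_self_vec, zero_add] at this
    · intro h
      rw [h, add_self_vec]
  rw [Finset.sum_congr rfl fun z _ => Finset.sum_congr rfl fun z' _ => by
    rw [if_congr (hcond z z') rfl rfl]]
  rw [Finset.sum_congr rfl fun z hz => Finset.sum_ite_eq'
    (Finset.univ.filter (fun w : Fin n → A => wt w ≤ t)) z (fun _ => (4:ℝ)^n)]
  rw [Finset.sum_congr rfl fun z hz => if_pos hz]
  rw [← card_S n t, Finset.sum_const, Finset.sum_const]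
  simp [mul_comm]

lemma h_big (n t u : ℕ) (hu : u ≤ n) (hbig : 2*t < u) :
    ∑ i ∈ Finset.range (n+1), (∑ l ∈ Finset.range (t+1), kraw n l i)^2 * kraw n i u = 0 := by
  obtain ⟨y, hy⟩ := exists_wt n u hu
  rw [← hy, core]
  refine Finset.sum_eq_zero fun z hz => Finset.sum_eq_zero fun z' hz' => ?_
  rw [Finset.mem_filter] at hz hz'
  rw [if_neg]
  intro hc
  have h1 : wt (z + z') ≤ wt z + wt z' := wt_add_le z z'
  rw [hc, hy] at h1
  omega

end EAHelp

/-- Hamming bound for nondegenerate EA quantum codes (Eq. (23) of the paper), abstracted to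
split weight distributions satisfying the MacWilliams constraints together with the
nondegeneracy condition `B_{i,0} = 0` for `0 < i < d`. -/
theorem ea_nondegenerate_hamming (n c d : ℕ) (hd : 1 ≤ d) (hdn : d ≤ n)
    (M : ℝ) (hM : 0 < M)
    (B Bp : ℕ → ℕ → ℝ)
    (hMacW : ∀ i ≤ n, ∀ j ≤ c, B i j =
      (1 / (2 ^ (n + c) * M)) * ∑ u ∈ Finset.range (n + 1), ∑ v ∈ Finset.range (c + 1),
        Bp u v * kraw n i u * kraw c j v)
    (hB00 : B 0 0 = 1) (hBp00 : Bp 0 0 = 1)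
    (hBnonneg : ∀ i ≤ n, ∀ j ≤ c, 0 ≤ B i j)
    (hBle : ∀ i ≤ n, ∀ j ≤ c, B i j ≤ Bp i j)
    (hnondeg : ∀ i, 1 ≤ i → i ≤ d - 1 → B i 0 = 0 ∧ Bp i 0 = 0)
    (hB0j : ∀ j, 1 ≤ j → j ≤ c → B 0 j = 0) :
    M * ∑ j ∈ Finset.range ((d - 1) / 2 + 1), (3 : ℝ) ^ j * (n.choose j) ≤ 2 ^ (n + c) := by
  classical
  set t := (d - 1) / 2 with ht
  set C0 : ℝ := ∑ j ∈ Finset.range (t + 1), (3 : ℝ) ^ j * (n.choose j) with hC0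
  have hC0one : (1:ℝ) ≤ C0 := by
    rw [hC0]
    calc (1:ℝ) = (3:ℝ)^0 * ((n.choose 0 : ℕ) : ℝ) := by simp
    _ ≤ ∑ j ∈ Finset.range (t + 1), (3 : ℝ) ^ j * (n.choose j) :=
        Finset.single_le_sum (f := fun j => (3:ℝ)^j * (n.choose j))
          (fun j _ => by positivity) (Finset.mem_range.mpr (Nat.succ_pos t))
  have hC0pos : (0:ℝ) < C0 := lt_of_lt_of_le one_pos hC0one
  set P : ℝ := (2:ℝ) ^ (n + c) with hP
  have hPpos : (0:ℝ) < P := by rw [hP]; positivity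
  -- the LP functional
  have hg0 : (∑ l ∈ Finset.range (t + 1), kraw n l 0)^2 = C0^2 := by
    rw [hC0]
    congr 1
    exact Finset.sum_congr rfl fun l _ => by rw [EAHelp.kraw_zero_right]
  -- lower bound for T
  have hT1 : C0^2 ≤ ∑ i ∈ Finset.range (n+1), ∑ j ∈ Finset.range (c+1),
      B i j * (∑ l ∈ Finset.range (t + 1), kraw n l i)^2 := by
    have hnn : ∀ i ∈ Finset.range (n+1), ∀ j ∈ Finset.range (c+1),
        0 ≤ B i j * (∑ l ∈ Finset.range (t + 1), kraw n l i)^2 := by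
      intro i hi j hj
      have h1 : 0 ≤ B i j := hBnonneg i (Nat.lt_succ_iff.mp (Finset.mem_range.mp hi))
        j (Nat.lt_succ_iff.mp (Finset.mem_range.mp hj))
      positivity
    calc C0^2 = B 0 0 * (∑ l ∈ Finset.range (t + 1), kraw n l 0)^2 := by
          rw [hB00, hg0, one_mul]
    _ ≤ ∑ j ∈ Finset.range (c+1), B 0 j * (∑ l ∈ Finset.range (t + 1), kraw n l 0)^2 :=
        Finset.single_le_sum (f := fun j => B 0 j * (∑ l ∈ Finset.range (t + 1), kraw n l 0)^2)
          (fun j hj => hnn 0 (Finset.mem_range.mpr (Nat.succ_pos n)) j hj)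
          (Finset.mem_range.mpr (Nat.succ_pos c))
    _ ≤ ∑ i ∈ Finset.range (n+1), ∑ j ∈ Finset.range (c+1),
          B i j * (∑ l ∈ Finset.range (t + 1), kraw n l i)^2 :=
        Finset.single_le_sum
          (f := fun i => ∑ j ∈ Finset.range (c+1), B i j * (∑ l ∈ Finset.range (t + 1), kraw n l i)^2)
          (fun i hi => Finset.sum_nonneg fun j hj => hnn i hi j hj)
          (Finset.mem_range.mpr (Nat.succ_pos n))
  -- collapse the j-sum of the MacWilliams data
  have key_j : ∀ i, ∑ j ∈ Finset.range (c+1), (∑ u ∈ Finset.range (n+1), ∑ v ∈ Finset.range (c+1),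
      Bp u v * kraw n i u * kraw c j v)
      = ∑ u ∈ Finset.range (n+1), Bp u 0 * kraw n i u * (4:ℝ)^c := by
    intro i
    rw [Finset.sum_comm]
    refine Finset.sum_congr rfl fun u _ => ?_
    rw [Finset.sum_comm]
    have hv : ∀ v ∈ Finset.range (c+1),
        (∑ j ∈ Finset.range (c+1), Bp u v * kraw n i u * kraw c j v)
        = (if v = 0 then Bp u 0 * kraw n i u * (4:ℝ)^c else 0) := by
      intro v hvm
      rw [← Finset.mul_sum,
        EAHelp.sum_kraw_range c v (Nat.lt_succ_iff.mp (Finset.mem_range.mp hvm))]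
      by_cases h : v = 0
      · rw [if_pos h, if_pos h, h]
      · rw [if_neg h, if_neg h, mul_zero]
    rw [Finset.sum_congr rfl hv,
      Finset.sum_ite_eq' (Finset.range (c+1)) 0 (fun _ => Bp u 0 * kraw n i u * (4:ℝ)^c),
      if_pos (Finset.mem_range.mpr (Nat.succ_pos c))]
  -- rewrite T via MacWilliams
  have hT2 : (∑ i ∈ Finset.range (n+1), ∑ j ∈ Finset.range (c+1),
        B i j * (∑ l ∈ Finset.range (t + 1), kraw n l i)^2)
      = (1 / (P * M)) * ∑ i ∈ Finset.range (n+1),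
          (∑ u ∈ Finset.range (n+1), Bp u 0 * kraw n i u * (4:ℝ)^c)
            * (∑ l ∈ Finset.range (t + 1), kraw n l i)^2 := by
    rw [Finset.mul_sum]
    refine Finset.sum_congr rfl fun i hi => ?_
    have hin : i ≤ n := Nat.lt_succ_iff.mp (Finset.mem_range.mp hi)
    calc ∑ j ∈ Finset.range (c+1), B i j * (∑ l ∈ Finset.range (t + 1), kraw n l i)^2
        = ∑ j ∈ Finset.range (c+1), (1 / (P * M)) *
            ((∑ u ∈ Finset.range (n+1), ∑ v ∈ Finset.range (c+1),
              Bp u v * kraw n i u * kraw c j v) * (∑ l ∈ Finset.range (t + 1), kraw n l i)^2) := by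
          refine Finset.sum_congr rfl fun j hj => ?_
          rw [hMacW i hin j (Nat.lt_succ_iff.mp (Finset.mem_range.mp hj)), hP]
          ring
    _ = (1 / (P * M)) * ((∑ j ∈ Finset.range (c+1),
            (∑ u ∈ Finset.range (n+1), ∑ v ∈ Finset.range (c+1),
              Bp u v * kraw n i u * kraw c j v)) * (∑ l ∈ Finset.range (t + 1), kraw n l i)^2) := by
          rw [← Finset.mul_sum, ← Finset.sum_mul]
    _ = (1 / (P * M)) * ((∑ u ∈ Finset.range (n+1), Bp u 0 * kraw n i u * (4:ℝ)^c)
            * (∑ l ∈ Finset.range (t + 1), kraw n l i)^2) := by rw [key_j i]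
  -- swap the i and u sums
  have hswap : (∑ i ∈ Finset.range (n+1),
        (∑ u ∈ Finset.range (n+1), Bp u 0 * kraw n i u * (4:ℝ)^c)
          * (∑ l ∈ Finset.range (t + 1), kraw n l i)^2)
      = ∑ u ∈ Finset.range (n+1), Bp u 0 * (4:ℝ)^c *
          (∑ i ∈ Finset.range (n+1), (∑ l ∈ Finset.range (t + 1), kraw n l i)^2 * kraw n i u) := by
    rw [Finset.sum_congr rfl fun i (_ : i ∈ Finset.range (n+1)) => Finset.sum_mul
      (Finset.range (n+1)) (fun u => Bp u 0 * kraw n i u * (4:ℝ)^c)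
      ((∑ l ∈ Finset.range (t + 1), kraw n l i)^2)]
    rw [Finset.sum_comm]
    refine Finset.sum_congr rfl fun u _ => ?_
    rw [Finset.mul_sum]
    refine Finset.sum_congr rfl fun i _ => ?_
    ring
  -- collapse the u-sum
  have hcollapse : (∑ u ∈ Finset.range (n+1), Bp u 0 * (4:ℝ)^c *
        (∑ i ∈ Finset.range (n+1), (∑ l ∈ Finset.range (t + 1), kraw n l i)^2 * kraw n i u))
      = (4:ℝ)^c * ((4:ℝ)^n * C0) := by
    rw [Finset.sum_eq_single_of_mem 0 (Finset.mem_range.mpr (Nat.succ_pos n))]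
    · rw [hBp00, EAHelp.h_zero n t, hC0]
      ring
    · intro u hu hne
      rcases le_or_gt u (d-1) with hle | hgt
      · rw [(hnondeg u (by omega) hle).2]
        ring
      · have h2t : 2*t < u := by omega
        rw [EAHelp.h_big n t u (Nat.lt_succ_iff.mp (Finset.mem_range.mp hu)) h2t]
        ring
  -- put everything together
  have hfin : C0^2 ≤ (1 / (P * M)) * ((4:ℝ)^c * ((4:ℝ)^n * C0)) := by
    calc C0^2 ≤ _ := hT1
    _ = _ := hT2
    _ = (1 / (P * M)) * ((4:ℝ)^c * ((4:ℝ)^n * C0)) := by rw [hswap, hcollapse]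
  have h4P : (4:ℝ)^c * (4:ℝ)^n = P^2 := by
    rw [hP]
    rw [show (4:ℝ) = 2^2 by norm_num, ← pow_mul, ← pow_mul, ← pow_add, ← pow_mul]
    ring_nf
  have hPM : (0:ℝ) < P * M := mul_pos hPpos hM
  have hkey : C0^2 * (P * M) ≤ P^2 * C0 := by
    have h1 := mul_le_mul_of_nonneg_right hfin (le_of_lt hPM)
    have h2 : (1 / (P * M)) * ((4:ℝ)^c * ((4:ℝ)^n * C0)) * (P * M) = P^2 * C0 := by
      field_simp
      nlinarith [h4P]
    rwa [h2] at h1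
  nlinarith [hkey, hPpos, hM, hC0pos, mul_pos hPpos hC0pos]
end

section
/- Asymptotic Gilbert–Varshamov rate for EA stabilizer codes: if R, ρ, δ are nonnegative reals with R < 1 + ρ - δ·log₂3 - H₂(δ) and 0 < δ < 1/2, then for all sufficiently large n the counting condition (2^{n+⌈Rn⌉-⌊ρn⌋} - 2^{n-⌈Rn⌉-⌊ρn⌋}) · Σ_{j=0}^{⌈δn⌉-1} binom(n,j) 3^j ≤ 4^n - 1 holds, where H₂(x) = -x log₂ x - (1-x) log₂(1-x). -/
open Finset

lemma sum_choose_pow_le (n m : ℕ) (x : ℝ) (hx : 0 ≤ x) :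
    ∑ j ∈ range m, (n.choose j : ℝ) * x ^ j ≤ (1 + x) ^ n := by
  have h1 : ∑ j ∈ range m, (n.choose j : ℝ) * x ^ j
      ≤ ∑ j ∈ range (max m (n+1)), (n.choose j : ℝ) * x ^ j := by
    refine Finset.sum_le_sum_of_subset_of_nonneg (Finset.range_subset_range.2 (le_max_left _ _)) ?_
    intro i _ _; positivity
  have h2 : ∑ j ∈ range (max m (n+1)), (n.choose j : ℝ) * x ^ j
      = ∑ j ∈ range (n+1), (n.choose j : ℝ) * x ^ j := by
    refine (Finset.sum_subset (Finset.range_subset_range.2 (le_max_right _ _)) ?_).symm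
    intro i _ hi
    simp only [Finset.mem_range, not_lt] at hi
    rw [Nat.choose_eq_zero_of_lt hi]; simp
  have h3 : (1 + x) ^ n = ∑ j ∈ range (n+1), (n.choose j : ℝ) * x ^ j := by
    rw [add_comm, add_pow]
    exact Finset.sum_congr rfl fun k hk => by rw [one_pow]; ring
  rw [h3]; rw [h2] at h1; exact h1

lemma sum_choose_three_le (n m : ℕ) (s : ℝ) (hs0 : 0 < s) (hs1 : s ≤ 1) :
    ∑ j ∈ range m, (n.choose j : ℝ) * 3 ^ j ≤ (1 + 3*s) ^ n / s ^ m := by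
  rw [le_div_iff₀ (by positivity)]
  calc (∑ j ∈ range m, (n.choose j : ℝ) * 3 ^ j) * s ^ m
      = ∑ j ∈ range m, (n.choose j : ℝ) * 3 ^ j * s ^ m := by rw [Finset.sum_mul]
    _ ≤ ∑ j ∈ range m, (n.choose j : ℝ) * (3*s) ^ j := by
        refine Finset.sum_le_sum fun j hj => ?_
        have hjm : j ≤ m := (Finset.mem_range.1 hj).le
        have hss : s ^ m ≤ s ^ j := pow_le_pow_of_le_one hs0.le hs1 hjm
        rw [mul_pow]
        calc (n.choose j : ℝ) * 3 ^ j * s ^ m ≤ (n.choose j : ℝ) * 3 ^ j * s ^ j :=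
              mul_le_mul_of_nonneg_left hss (by positivity)
          _ = (n.choose j : ℝ) * (3 ^ j * s ^ j) := by ring
    _ ≤ (1 + 3*s) ^ n := sum_choose_pow_le n m (3*s) (by positivity)


/-- The binary entropy function. -/
noncomputable def binEnt (x : ℝ) : ℝ := -x * Real.logb 2 x - (1 - x) * Real.logb 2 (1 - x)

/-- Asymptotic Gilbert–Varshamov rate for EA stabilizer codes: if
`R < 1 + ρ - δ log₂ 3 - H₂(δ)` then the counting condition of Theorem 2 holds for all
sufficiently large `n`. -/
theorem ea_gv_asymptotic (R ρ δ : ℝ) (hR : 0 ≤ R) (hρ : 0 ≤ ρ)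
    (hδ0 : 0 < δ) (hδ1 : δ < 1 / 2)
    (hrate : R < 1 + ρ - δ * Real.logb 2 3 - binEnt δ) :
    ∃ N : ℕ, ∀ n : ℕ, N ≤ n →
      ((2 : ℝ) ^ ((n : ℤ) + ⌈R * n⌉ - ⌊ρ * n⌋) - (2 : ℝ) ^ ((n : ℤ) - ⌈R * n⌉ - ⌊ρ * n⌋)) *
          ∑ j ∈ Finset.range ⌈δ * n⌉₊, (n.choose j : ℝ) * 3 ^ j
        ≤ 4 ^ n - 1 := by
  -- setup
  have h1δ : (0:ℝ) < 1 - δ := by linarith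
  set s : ℝ := δ / (3 * (1 - δ)) with hs_def
  have hs0 : 0 < s := by positivity
  have hs1 : s ≤ 1 := by
    rw [hs_def, div_le_one (by positivity)]; linarith
  have h13s : 1 + 3 * s = (1 - δ)⁻¹ := by
    rw [hs_def]; field_simp; ring
  set E : ℝ := (1 + R - ρ) + Real.logb 2 ((1-δ)⁻¹) + (-δ) * Real.logb 2 s with hE_def
  set b : ℝ := (2:ℝ) ^ E with hb_def
  have hb0 : 0 < b := Real.rpow_pos_of_pos (by norm_num) E
  have hblog : b = (2:ℝ) ^ (1 + R - ρ) * ((1 + 3*s) * s ^ (-δ)) := by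
    rw [hb_def, hE_def, Real.rpow_add (by norm_num), Real.rpow_add (by norm_num)]
    rw [Real.rpow_logb (by norm_num) (by norm_num) (by positivity)]
    rw [h13s, mul_assoc]
    congr 1
    congr 1
    rw [show (-δ) * Real.logb 2 s = Real.logb 2 s * (-δ) by ring,
      Real.rpow_mul (by norm_num : (0:ℝ) ≤ 2),
      Real.rpow_logb (by norm_num) (by norm_num) hs0]
  have hb4 : b < 4 := by
    have h4 : (4:ℝ) = (2:ℝ) ^ (2:ℝ) := by
      rw [show (2:ℝ) = ((2:ℕ):ℝ) by norm_num, Real.rpow_natCast]; norm_num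
    rw [hb_def, h4, Real.rpow_lt_rpow_left_iff (by norm_num : (1:ℝ) < 2)]
    have hls : Real.logb 2 s = Real.logb 2 δ - Real.logb 2 3 - Real.logb 2 (1-δ) := by
      rw [hs_def, Real.logb_div (by positivity) (by positivity),
        Real.logb_mul (by norm_num) (by positivity)]
      ring
    have hli : Real.logb 2 ((1-δ)⁻¹) = - Real.logb 2 (1-δ) := Real.logb_inv _ _
    rw [hE_def, hls, hli]
    have hB : binEnt δ = -δ * Real.logb 2 δ - (1 - δ) * Real.logb 2 (1 - δ) := rfl
    nlinarith [hrate]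
  -- eventual inequality
  set C : ℝ := 4 / s with hC_def
  have hC0 : 0 < C := by positivity
  have htend : Filter.Tendsto (fun n : ℕ => C * (b/4)^n + (1/4:ℝ)^n) Filter.atTop (nhds 0) := by
    have h1 : Filter.Tendsto (fun n : ℕ => (b/4:ℝ)^n) Filter.atTop (nhds 0) :=
      tendsto_pow_atTop_nhds_zero_of_lt_one (by positivity) ((div_lt_one (by norm_num)).2 hb4)
    have h2 : Filter.Tendsto (fun n : ℕ => (1/4:ℝ)^n) Filter.atTop (nhds 0) :=
      tendsto_pow_atTop_nhds_zero_of_lt_one (by norm_num) (by norm_num)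
    have := (h1.const_mul C).add h2
    simpa using this
  have hev : ∀ᶠ n in Filter.atTop, C * (b/4)^n + (1/4:ℝ)^n < 1 :=
    htend.eventually_lt_const (by norm_num)
  obtain ⟨N, hN⟩ := Filter.eventually_atTop.1 hev
  refine ⟨N, fun n hn => ?_⟩
  set S : ℝ := ∑ j ∈ Finset.range ⌈δ * n⌉₊, (n.choose j : ℝ) * 3 ^ j with hS_def
  have hSnn : 0 ≤ S := by
    rw [hS_def]; positivity
  set x : ℝ := (1 + R - ρ) * n with hx_def
  -- step 1
  have step1 : ((2 : ℝ) ^ ((n : ℤ) + ⌈R * n⌉ - ⌊ρ * n⌋) - (2 : ℝ) ^ ((n : ℤ) - ⌈R * n⌉ - ⌊ρ * n⌋)) * S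
      ≤ (2 : ℝ) ^ ((n : ℤ) + ⌈R * n⌉ - ⌊ρ * n⌋) * S := by
    have h2c : (0:ℝ) < (2:ℝ) ^ ((n : ℤ) - ⌈R * n⌉ - ⌊ρ * n⌋) := by positivity
    have := mul_le_mul_of_nonneg_right (by linarith :
      ((2 : ℝ) ^ ((n : ℤ) + ⌈R * n⌉ - ⌊ρ * n⌋) - (2 : ℝ) ^ ((n : ℤ) - ⌈R * n⌉ - ⌊ρ * n⌋))
        ≤ (2 : ℝ) ^ ((n : ℤ) + ⌈R * n⌉ - ⌊ρ * n⌋)) hSnn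
    exact this
  -- step 2 : exponent bound
  have ha : ((2:ℝ) ^ ((n : ℤ) + ⌈R * n⌉ - ⌊ρ * n⌋)) ≤ (2:ℝ) ^ (x + 2 : ℝ) := by
    rw [← Real.rpow_intCast 2]
    apply Real.rpow_le_rpow_of_exponent_le (by norm_num)
    have h1 : (⌈R * n⌉ : ℝ) < R * n + 1 := Int.ceil_lt_add_one _
    have h2 : (ρ * n) - 1 < (⌊ρ * n⌋ : ℝ) := Int.sub_one_lt_floor _
    push_cast
    rw [hx_def]
    linarith
  -- step 3 : sum bound
  have hm : ((⌈δ * n⌉₊ : ℕ) : ℝ) ≤ δ * n + 1 := by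
    have := Nat.ceil_lt_add_one (by positivity : (0:ℝ) ≤ δ * n)
    linarith
  have hsm : s ^ (δ * (n:ℝ) + 1 : ℝ) ≤ s ^ (⌈δ * n⌉₊ : ℕ) := by
    rw [← Real.rpow_natCast s]
    exact Real.rpow_le_rpow_of_exponent_ge hs0 hs1 hm
  have hS2 : S ≤ (1 + 3*s) ^ n / s ^ (δ * (n:ℝ) + 1 : ℝ) := by
    refine (sum_choose_three_le n _ s hs0 hs1).trans ?_
    exact div_le_div_of_nonneg_left (by positivity) (Real.rpow_pos_of_pos hs0 _) hsm
  -- combine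
  have hsd0 : (0:ℝ) < s ^ (δ * (n:ℝ) : ℝ) := Real.rpow_pos_of_pos hs0 _
  have key : (2:ℝ) ^ (x + 2 : ℝ) * ((1 + 3*s) ^ n / s ^ (δ * (n:ℝ) + 1 : ℝ)) = C * b ^ n := by
    have e1 : (2:ℝ) ^ (x + 2 : ℝ) = (2:ℝ) ^ (x:ℝ) * 4 := by
      rw [Real.rpow_add (by norm_num)]
      congr 1
      rw [show (2:ℝ) = ((2:ℕ):ℝ) by norm_num, Real.rpow_natCast]; norm_num
    have e2 : s ^ (δ * (n:ℝ) + 1 : ℝ) = s ^ (δ * (n:ℝ) : ℝ) * s := by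
      rw [Real.rpow_add hs0, Real.rpow_one]
    have e3 : b ^ n = (2:ℝ) ^ (x:ℝ) * ((1 + 3*s) ^ n * (s ^ (δ * (n:ℝ) : ℝ))⁻¹) := by
      rw [hblog, mul_pow, mul_pow]
      congr 1
      · rw [← Real.rpow_natCast ((2:ℝ) ^ (1 + R - ρ : ℝ)) n, ← Real.rpow_mul (by norm_num), hx_def]
      congr 1
      rw [← Real.rpow_natCast (s ^ (-δ:ℝ)) n, ← Real.rpow_mul hs0.le,
        show (-δ) * (n:ℝ) = -(δ * n) by ring, Real.rpow_neg hs0.le]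
    rw [e1, e2, e3, hC_def]
    field_simp
  have last : C * b ^ n ≤ 4 ^ n - 1 := by
    have hn1 := hN n hn
    have h4n : (0:ℝ) < 4 ^ n := by positivity
    have e1 : C * (b/4)^n * 4^n = C * b^n := by
      rw [div_pow]; field_simp
    have e2 : ((1/4:ℝ))^n * 4^n = 1 := by
      rw [div_pow]; field_simp; simp
    nlinarith [mul_le_mul_of_nonneg_right hn1.le h4n.le]
  calc ((2 : ℝ) ^ ((n : ℤ) + ⌈R * n⌉ - ⌊ρ * n⌋) - (2 : ℝ) ^ ((n : ℤ) - ⌈R * n⌉ - ⌊ρ * n⌋)) * S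
      ≤ (2 : ℝ) ^ ((n : ℤ) + ⌈R * n⌉ - ⌊ρ * n⌋) * S := step1
    _ ≤ (2:ℝ) ^ (x + 2 : ℝ) * ((1 + 3*s) ^ n / s ^ (δ * (n:ℝ) + 1 : ℝ)) := by
        apply mul_le_mul ha hS2 hSnn (by positivity)
    _ = C * b ^ n := key
    _ ≤ 4 ^ n - 1 := last
end
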